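/- arXiv:2202.11871 — 5 statements merged into one kernel-verified Lean document; each statement's English description precedes it below -/
import Mathlib

section
/- Let n ≥ 1 and let φ : ℝⁿ → ℝⁿ be a continuous map satisfying ⟨x, φ(x)⟩ = 0 for every x ∈ ℝⁿ. If x : ℝ → ℝⁿ is differentiable, satisfies xᵢ'(t) = xᵢ(t)·(1 − ‖x(t)‖²) + φᵢ(x(t)) for every i and t, and ‖x(0)‖ = 1, then ‖x(t)‖ = 1 for all t ≥ 0; that is, the unit sphere is forward invariant for the extended system. -/
/-- the unit sphere is forward invariant for the sphere-extended system
xᵢ' = xᵢ(1 − ‖x‖²) + φᵢ(x) when φ is continuous and tangent (⟨x, φ(x)⟩ = 0). -/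
theorem stmt_1 (n : ℕ) (hn : 1 ≤ n)
    (φ : EuclideanSpace ℝ (Fin n) → EuclideanSpace ℝ (Fin n))
    (hφcont : Continuous φ)
    (hφtan : ∀ z : EuclideanSpace ℝ (Fin n), (inner ℝ z (φ z) : ℝ) = 0)
    (x : ℝ → EuclideanSpace ℝ (Fin n))
    (hxdiff : Differentiable ℝ x)
    (hxode : ∀ (i : Fin n) (t : ℝ),
      HasDerivAt (fun s => x s i) (x t i * (1 - ‖x t‖ ^ 2) + φ (x t) i) t)
    (hx0 : ‖x 0‖ = 1) :
    ∀ t : ℝ, 0 ≤ t → ‖x t‖ = 1 := by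
  -- r t = ‖x t‖²
  set r : ℝ → ℝ := fun t => ‖x t‖ ^ 2 with hr_def
  have hnorm_sq : ∀ t, r t = ∑ i, x t i ^ 2 := by
    intro t
    show ‖x t‖ ^ 2 = _
    rw [← real_inner_self_eq_norm_sq]
    rw [PiLp.inner_apply]; simp [sq]
  have htan : ∀ t, ∑ i, x t i * φ (x t) i = 0 := by
    intro t
    have := hφtan (x t)
    simpa [PiLp.inner_apply, mul_comm] using this
  -- derivative of r
  have hr' : ∀ t, HasDerivAt r (2 * r t * (1 - r t)) t := by
    intro t
    have h1 : HasDerivAt (fun s => ∑ i, x s i ^ 2)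
        (∑ i, 2 * x t i * (x t i * (1 - ‖x t‖ ^ 2) + φ (x t) i)) t := by
      apply HasDerivAt.fun_sum
      intro i _
      have := (hxode i t).fun_pow 2
      simpa [mul_comm, mul_assoc, mul_left_comm] using this
    have heq : (∑ i, 2 * x t i * (x t i * (1 - ‖x t‖ ^ 2) + φ (x t) i))
        = 2 * r t * (1 - r t) := by
      have : (∑ i, 2 * x t i * (x t i * (1 - ‖x t‖ ^ 2) + φ (x t) i))
          = 2 * (1 - ‖x t‖ ^ 2) * (∑ i, x t i ^ 2) + 2 * (∑ i, x t i * φ (x t) i) := by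
        rw [Finset.mul_sum, Finset.mul_sum, ← Finset.sum_add_distrib]
        apply Finset.sum_congr rfl
        intro i _
        ring
      rw [this, htan t, ← hnorm_sq t]
      rw [hr_def]
      ring
    have h2 : HasDerivAt r (∑ i, 2 * x t i * (x t i * (1 - ‖x t‖ ^ 2) + φ (x t) i)) t := by
      have : r = fun s => ∑ i, x s i ^ 2 := funext hnorm_sq
      rw [this]
      exact h1
    rwa [heq] at h2
  -- continuity of r
  have hrcont : Continuous r := by
    exact (continuous_norm.comp hxdiff.continuous).pow 2
  -- G t = ∫₀ᵗ 2 r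
  set G : ℝ → ℝ := fun t => ∫ s in (0:ℝ)..t, 2 * r s with hG_def
  have hG' : ∀ t, HasDerivAt G (2 * r t) t := fun t =>
    ((continuous_const.mul hrcont).integral_hasStrictDerivAt 0 t).hasDerivAt
  -- w t = (r t - 1) * exp (G t) has zero derivative
  set w : ℝ → ℝ := fun t => (r t - 1) * Real.exp (G t) with hw_def
  have hw' : ∀ t, HasDerivAt w 0 t := by
    intro t
    have h1 : HasDerivAt (fun s => r s - 1) (2 * r t * (1 - r t)) t := (hr' t).sub_const 1
    have h2 : HasDerivAt (fun s => Real.exp (G s)) (Real.exp (G t) * (2 * r t)) t :=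
      (Real.hasDerivAt_exp (G t)).comp t (hG' t)
    have : HasDerivAt (fun s => (r s - 1) * Real.exp (G s)) _ t := h1.fun_mul h2
    convert this using 1
    ring
  have hwdiff : Differentiable ℝ w := fun t => (hw' t).differentiableAt
  have hwderiv : ∀ t, deriv w t = 0 := fun t => (hw' t).deriv
  have hwconst : ∀ t, w t = w 0 := fun t =>
    is_const_of_deriv_eq_zero hwdiff hwderiv t 0
  have hw0 : w 0 = 0 := by
    simp [hw_def, hr_def, hx0]
  intro t _
  have : (r t - 1) * Real.exp (G t) = 0 := by
    have h := hwconst t; rwa [hw0] at h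
  have hrt : r t = 1 := by
    rcases mul_eq_zero.mp this with h | h
    · linarith
    · exact absurd h (Real.exp_ne_zero _)
  have : ‖x t‖ ^ 2 = 1 := hrt
  nlinarith [norm_nonneg (x t)]
end

section
/- Let n ≥ 1 and let φ : ℝⁿ → ℝⁿ be a continuous map satisfying ⟨x, φ(x)⟩ = 0 for every x ∈ ℝⁿ. If x : [0,∞) → ℝⁿ is differentiable, satisfies xᵢ'(t) = xᵢ(t)·(1 − ‖x(t)‖²) + φᵢ(x(t)) for every i and t, and x(0) ≠ 0, then ‖x(t)‖² → 1 as t → ∞; that is, the unit sphere is globally attracting for the extended system on ℝⁿ \ {0}. -/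
open Real Set Filter


/-- the unit sphere is globally attracting on ℝⁿ \ {0} for the
sphere-extended system xᵢ' = xᵢ(1 − ‖x‖²) + φᵢ(x): if x(0) ≠ 0 then ‖x(t)‖² → 1. -/
theorem stmt_3 (n : ℕ) (hn : 1 ≤ n)
    (φ : EuclideanSpace ℝ (Fin n) → EuclideanSpace ℝ (Fin n))
    (hφcont : Continuous φ)
    (hφtan : ∀ z : EuclideanSpace ℝ (Fin n), (inner ℝ z (φ z) : ℝ) = 0)
    (x : ℝ → EuclideanSpace ℝ (Fin n))
    (hxdiff : DifferentiableOn ℝ x (Set.Ici (0 : ℝ)))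
    (hxode : ∀ (i : Fin n) (t : ℝ), 0 ≤ t →
      HasDerivWithinAt (fun s => x s i) (x t i * (1 - ‖x t‖ ^ 2) + φ (x t) i)
        (Set.Ici (0 : ℝ)) t)
    (hx0 : x 0 ≠ 0) :
    Filter.Tendsto (fun t => ‖x t‖ ^ 2) Filter.atTop (nhds 1) := by
  set r : ℝ → ℝ := fun t => ‖x t‖ ^ 2 with hr_def
  have hnormsq : ∀ t, r t = ∑ i, (x t i)^2 := by
    intro t
    show ‖x t‖ ^ 2 = _
    rw [EuclideanSpace.norm_eq, Real.sq_sqrt (by positivity)]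
    simp [Real.norm_eq_abs, sq_abs]
  -- derivative of r
  have hr : ∀ t ≥ (0:ℝ), HasDerivWithinAt r (2 * r t * (1 - r t)) (Set.Ici 0) t := by
    intro t ht
    have h1 : HasDerivWithinAt (fun s => ∑ i, (x s i)^2)
        (∑ i, 2 * x t i * (x t i * (1 - ‖x t‖ ^ 2) + φ (x t) i)) (Set.Ici 0) t := by
      refine HasDerivWithinAt.fun_sum fun i _ => ?_
      have := (hxode i t ht).fun_pow 2
      simpa [mul_comm, mul_assoc, mul_left_comm] using this
    have hsum : (∑ i, 2 * x t i * (x t i * (1 - ‖x t‖ ^ 2) + φ (x t) i))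
        = 2 * r t * (1 - r t) := by
      have hinner : (∑ i, x t i * φ (x t) i) = 0 := by
        have := hφtan (x t)
        simpa [PiLp.inner_apply, RCLike.inner_apply, mul_comm] using this
      have : (∑ i, 2 * x t i * (x t i * (1 - ‖x t‖ ^ 2) + φ (x t) i))
          = 2 * (1 - ‖x t‖^2) * (∑ i, (x t i)^2) + 2 * (∑ i, x t i * φ (x t) i) := by
        rw [Finset.mul_sum, Finset.mul_sum, ← Finset.sum_add_distrib]
        congr 1; ext i; ring
      rw [this, hinner, ← hnormsq t]
      ring
    have := h1.congr_deriv hsum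
    exact this.congr (fun s _ => hnormsq s) (hnormsq t)
  have hrcont : ContinuousOn r (Set.Ici 0) := by
    exact ((hxdiff.continuousOn).norm.pow 2)
  set r0 : ℝ := r 0 with hr0_def
  have hr0pos : 0 < r0 := by
    have : 0 < ‖x 0‖ := norm_pos_iff.2 hx0
    rw [hr0_def]
    show 0 < ‖x 0‖ ^ 2
    positivity
  -- F t = r0 * exp(2t) * (r t - 1) - (r0 - 1) * r t
  set F : ℝ → ℝ := fun t => r0 * Real.exp (2*t) * (r t - 1) - (r0 - 1) * r t with hF_def
  have hFderiv : ∀ t ≥ (0:ℝ), HasDerivWithinAt F (2 * (1 - r t) * F t) (Set.Ici 0) t := by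
    intro t ht
    have hE : HasDerivAt (fun s => Real.exp (2*s)) (2 * Real.exp (2*t)) t := by
      have := (Real.hasDerivAt_exp (2*t)).comp t ((hasDerivAt_id t).const_mul 2)
      simpa [Function.comp_def, mul_comm] using this
    have h1 : HasDerivWithinAt F
        ((r0 * (2 * Real.exp (2*t)) * (r t - 1) + r0 * Real.exp (2*t) * (2 * r t * (1 - r t)))
          - (r0 - 1) * (2 * r t * (1 - r t))) (Set.Ici 0) t := by
      exact (((hE.hasDerivWithinAt.const_mul r0).mul ((hr t ht).sub_const 1)).sub
        ((hr t ht).const_mul (r0 - 1)))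
    convert h1 using 1
    rw [hF_def]
    ring
  have hF0 : F 0 = 0 := by rw [hF_def]; simp [hr0_def]; ring
  -- F vanishes on [0, ∞)
  have hFzero : ∀ t ≥ (0:ℝ), F t = 0 := by
    intro T hT
    have hFc : ContinuousOn F (Set.Icc 0 T) := by
      apply ContinuousOn.sub
      · exact ((continuousOn_const.mul (Real.continuous_exp.comp (continuous_const.mul continuous_id)).continuousOn).mul
          ((hrcont.mono Icc_subset_Ici_self).sub continuousOn_const))
      · exact continuousOn_const.mul (hrcont.mono Icc_subset_Ici_self)
    -- bound on the coefficient
    obtain ⟨K, hK⟩ : ∃ K, ∀ s ∈ Set.Icc (0:ℝ) T, ‖2 * (1 - r s)‖ ≤ K := by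
      have hc : ContinuousOn (fun s => 2 * (1 - r s)) (Set.Icc 0 T) :=
        continuousOn_const.mul (continuousOn_const.sub (hrcont.mono Icc_subset_Ici_self))
      exact (isCompact_Icc.exists_bound_of_continuousOn hc)
    have := norm_le_gronwallBound_of_norm_deriv_right_le (f := F)
      (f' := fun s => 2 * (1 - r s) * F s) (δ := 0) (K := K) (ε := 0) (a := 0) (b := T)
      hFc
      (fun s hs => ((hFderiv s hs.1).mono (Set.Ici_subset_Ici.2 hs.1)))
      (by simp [hF0])
      (fun s hs => by
        have h1 := hK s (Set.mem_Icc.2 ⟨hs.1, hs.2.le⟩)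
        have : ‖2 * (1 - r s) * F s‖ = ‖2 * (1 - r s)‖ * ‖F s‖ := norm_mul _ _
        rw [this, add_zero]
        exact mul_le_mul_of_nonneg_right h1 (norm_nonneg _))
      T (Set.mem_Icc.2 ⟨hT, le_refl T⟩)
    rw [gronwallBound_ε0, zero_mul] at this
    exact norm_eq_zero.mp (le_antisymm this (norm_nonneg _))
  -- explicit formula
  have hformula : ∀ t ≥ (0:ℝ), r t = r0 / (r0 + (1 - r0) * Real.exp (-(2*t))) := by
    intro t ht
    have hF : r0 * Real.exp (2*t) * (r t - 1) - (r0 - 1) * r t = 0 := hFzero t ht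
    have hE1 : (1:ℝ) ≤ Real.exp (2*t) := by
      rw [← Real.exp_zero]; exact Real.exp_le_exp.2 (by linarith)
    have hden : 0 < r0 * Real.exp (2*t) - r0 + 1 := by nlinarith
    have hr_eq : r t * (r0 * Real.exp (2*t) - r0 + 1) = r0 * Real.exp (2*t) := by nlinarith [hF]
    have hEpos : 0 < Real.exp (2*t) := Real.exp_pos _
    have hne : r0 + (1 - r0) * Real.exp (-(2*t)) ≠ 0 := by
      have : r0 + (1 - r0) * Real.exp (-(2*t))
          = (r0 * Real.exp (2*t) - r0 + 1) / Real.exp (2*t) := by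
        rw [Real.exp_neg]; field_simp; ring
      rw [this]
      positivity
    rw [eq_div_iff hne, Real.exp_neg]
    field_simp
    linear_combination hr_eq
  -- limit
  have hlim : Tendsto (fun t => r0 / (r0 + (1 - r0) * Real.exp (-(2*t)))) atTop (nhds 1) := by
    have h1 : Tendsto (fun t : ℝ => Real.exp (-(2*t))) atTop (nhds 0) := by
      have h2 : Tendsto (fun t : ℝ => 2*t) atTop atTop :=
        tendsto_id.const_mul_atTop (by norm_num)
      exact Real.tendsto_exp_neg_atTop_nhds_zero.comp h2
    have h2 : Tendsto (fun t => r0 + (1 - r0) * Real.exp (-(2*t))) atTop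
        (nhds (r0 + (1 - r0) * 0)) := tendsto_const_nhds.add (tendsto_const_nhds.mul h1)
    have h3 := (tendsto_const_nhds (x := r0) (f := atTop)).div h2
      (by simpa using hr0pos.ne')
    convert h3 using 2 <;> simp [div_self hr0pos.ne']
  refine hlim.congr' ?_
  filter_upwards [eventually_ge_atTop (0:ℝ)] with t ht
  exact (hformula t ht).symm
end

section
/- Let n ≥ 1, let φ : ℝⁿ → ℝⁿ be locally Lipschitz with |φᵢ(x)| ≤ B for every i and every x ∈ ℝⁿ, and let σ > 0 satisfy σ³ − σ > B. Define the vector field Y on ℝⁿ by Yᵢ(y) = (yᵢ − σ)·(1 − ‖y − σ𝟙‖²) + φᵢ(y − σ𝟙), where 𝟙 is the all-ones vector. If y : [0,∞) → ℝⁿ is differentiable with y'(t) = Y(y(t)) for all t ≥ 0 and yᵢ(0) > 0 for every i, then yᵢ(t) > 0 for every i and every t ≥ 0; that is, the open positive orthant ℝⁿ₊₊ is forward invariant for Y. -/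
open Topology Filter


/-- The all-ones vector in ℝⁿ (Euclidean). -/
def allOnes (n : ℕ) : EuclideanSpace ℝ (Fin n) := WithLp.toLp 2 (fun _ => 1)

/-- the open positive orthant is forward invariant for the translated
sphere-extended field Yᵢ(y) = (yᵢ − σ)(1 − ‖y − σ𝟙‖²) + φᵢ(y − σ𝟙), when φ is locally
Lipschitz, coordinatewise bounded by B, and σ³ − σ > B. -/
theorem stmt_5 (n : ℕ) (hn : 1 ≤ n) (B : ℝ)
    (φ : EuclideanSpace ℝ (Fin n) → EuclideanSpace ℝ (Fin n))
    (hφlip : LocallyLipschitz φ)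
    (hφbdd : ∀ (z : EuclideanSpace ℝ (Fin n)) (i : Fin n), |φ z i| ≤ B)
    (σ : ℝ) (hσ : 0 < σ) (hσB : B < σ ^ 3 - σ)
    (Y : EuclideanSpace ℝ (Fin n) → EuclideanSpace ℝ (Fin n))
    (hY : ∀ (z : EuclideanSpace ℝ (Fin n)) (i : Fin n),
      Y z i = (z i - σ) * (1 - ‖z - σ • allOnes n‖ ^ 2) + φ (z - σ • allOnes n) i)
    (y : ℝ → EuclideanSpace ℝ (Fin n))
    (hyode : ∀ t : ℝ, 0 ≤ t → HasDerivWithinAt y (Y (y t)) (Set.Ici (0 : ℝ)) t)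
    (hy0 : ∀ i : Fin n, 0 < y 0 i) :
    ∀ t : ℝ, 0 ≤ t → ∀ i : Fin n, 0 < y t i := by
  by_contra hcon
  push_neg at hcon
  obtain ⟨t₀, ht₀, i₀, hi₀⟩ := hcon
  -- coordinatewise derivative
  have hderiv : ∀ (i : Fin n) (t : ℝ), 0 ≤ t →
      HasDerivWithinAt (fun s => y s i) (Y (y t) i) (Set.Ici (0:ℝ)) t := by
    intro i t ht
    have := (EuclideanSpace.proj (𝕜 := ℝ) i).hasFDerivAt.comp_hasDerivWithinAt t (hyode t ht)
    exact this
  have hcont : ∀ i : Fin n, ContinuousOn (fun s => y s i) (Set.Ici (0:ℝ)) :=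
    fun i t ht => (hderiv i t ht).continuousWithinAt
  set S : Set ℝ := {t | 0 ≤ t ∧ ∃ i, y t i ≤ 0} with hS
  have hSeq : S = ⋃ i : Fin n, (Set.Ici (0:ℝ) ∩ (fun s => y s i) ⁻¹' Set.Iic 0) := by
    ext t
    simp only [hS, Set.mem_setOf_eq, Set.mem_iUnion, Set.mem_inter_iff, Set.mem_Ici,
      Set.mem_preimage, Set.mem_Iic]
    tauto
  have hSclosed : IsClosed S := by
    rw [hSeq]
    exact isClosed_iUnion_of_finite fun i =>
      (hcont i).preimage_isClosed_of_isClosed isClosed_Ici isClosed_Iic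
  have hSne : S.Nonempty := ⟨t₀, ht₀, i₀, hi₀⟩
  have hSbdd : BddBelow S := ⟨0, fun t ht => ht.1⟩
  set T := sInf S with hT
  have hTS : T ∈ S := hSclosed.csInf_mem hSne hSbdd
  obtain ⟨hT0, i, hyTi⟩ := hTS
  have hTpos : 0 < T := by
    rcases hT0.lt_or_eq with h | h
    · exact h
    · exact absurd hyTi (by rw [← h]; exact not_le.mpr (hy0 i))
  have hpos : ∀ t, 0 ≤ t → t < T → ∀ j, 0 < y t j := by
    intro t ht htT j
    by_contra h
    push_neg at h
    exact absurd ⟨ht, j, h⟩ (notMem_of_lt_csInf htT hSbdd)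
  have hfilter : 𝓝[Set.Ico (0:ℝ) T] T = 𝓝[Set.Iio T] T :=
    nhdsWithin_Ico_eq_nhdsLT hTpos
  haveI hNB : (𝓝[Set.Ico (0:ℝ) T] T).NeBot := by rw [hfilter]; infer_instance
  -- y T i = 0
  have hge : 0 ≤ y T i := by
    have htend : Filter.Tendsto (fun s => y s i) (𝓝[Set.Ico (0:ℝ) T] T) (𝓝 (y T i)) :=
      (hcont i T hT0).mono (Set.Ico_subset_Ici_self)
    refine ge_of_tendsto htend ?_
    filter_upwards [self_mem_nhdsWithin] with t ht
    exact (hpos t ht.1 ht.2 i).le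
  have heq : y T i = 0 := le_antisymm hyTi hge
  -- key coordinate of translated point
  have hvi : (y T - σ • allOnes n) i = -σ := by
    simp [allOnes, heq]
  -- norm lower bound
  have hnorm : σ ^ 2 ≤ ‖y T - σ • allOnes n‖ ^ 2 := by
    have h1 : ‖y T - σ • allOnes n‖ ^ 2 = ∑ j, ‖(y T - σ • allOnes n) j‖ ^ 2 := by
      rw [EuclideanSpace.norm_eq, Real.sq_sqrt]
      positivity
    rw [h1]
    calc σ ^ 2 = ‖(y T - σ • allOnes n) i‖ ^ 2 := by
          rw [hvi]; rw [norm_neg, Real.norm_eq_abs, abs_of_pos hσ]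
      _ ≤ ∑ j, ‖(y T - σ • allOnes n) j‖ ^ 2 :=
          Finset.single_le_sum (f := fun j => ‖(y T - σ • allOnes n) j‖ ^ 2)
            (fun j _ => sq_nonneg _) (Finset.mem_univ i)
  -- the field points inward: Y (y T) i > 0
  have hd : 0 < Y (y T) i := by
    rw [hY, heq]
    have hb := (abs_le.mp (hφbdd (y T - σ • allOnes n) i)).1
    nlinarith [mul_le_mul_of_nonneg_left hnorm hσ.le]
  -- but the slope from the left is ≤ 0
  have hslope := hasDerivWithinAt_iff_tendsto_slope.mp (hderiv i T hT0)
  have hmono : 𝓝[Set.Ico (0:ℝ) T] T ≤ 𝓝[Set.Ici (0:ℝ) \ {T}] T :=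
    nhdsWithin_mono T (fun t ht => ⟨ht.1, ne_of_lt ht.2⟩)
  have htend2 : Filter.Tendsto (slope (fun s => y s i) T) (𝓝[Set.Ico (0:ℝ) T] T)
      (𝓝 (Y (y T) i)) := hslope.mono_left hmono
  have hle : Y (y T) i ≤ 0 := by
    refine le_of_tendsto htend2 ?_
    filter_upwards [self_mem_nhdsWithin] with t ht
    have hpt := hpos t ht.1 ht.2 i
    have hs : slope (fun s => y s i) T t = y t i / (t - T) := by
      rw [slope_def_field, heq, sub_zero]
    rw [hs]
    exact div_nonpos_of_nonneg_of_nonpos hpt.le (by linarith [ht.2])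
  linarith
end

section
/- Let n ≥ 1, let η ≥ 0, and let u, v ∈ ℝⁿ satisfy |uᵢ − vᵢ| ≤ η for every i. Define the logit map δ : ℝⁿ → ℝⁿ by δᵢ(y) = e^{yᵢ} / Σⱼ e^{yⱼ}. Then for every i, |δᵢ(u) − δᵢ(v)| ≤ 1 − e^{−2η}; that is, ‖δ(u) − δ(v)‖_∞ ≤ 1 − e^{−2η}. -/
/-- The logit map δᵢ(y) = e^{yᵢ} / Σⱼ e^{yⱼ}. -/
noncomputable def logitMap (n : ℕ) (y : Fin n → ℝ) : Fin n → ℝ :=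
  fun i => Real.exp (y i) / ∑ j, Real.exp (y j)

lemma logit_key (n : ℕ) (hn : 1 ≤ n) (η : ℝ) (u v : Fin n → ℝ)
    (huv : ∀ i, |u i - v i| ≤ η) (i : Fin n) :
    Real.exp (-(2 * η)) * logitMap n u i ≤ logitMap n v i := by
  haveI : Nonempty (Fin n) := Fin.pos_iff_nonempty.mp hn
  have hSu : (0:ℝ) < ∑ j, Real.exp (u j) :=
    Finset.sum_pos (fun j _ => Real.exp_pos _) Finset.univ_nonempty
  have hnum : Real.exp (u i - η) ≤ Real.exp (v i) := by
    apply Real.exp_le_exp.mpr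
    have := abs_le.mp (huv i); linarith [this.1]
  have hden : (∑ j, Real.exp (v j)) ≤ (∑ j, Real.exp (u j)) * Real.exp η := by
    rw [Finset.sum_mul]
    apply Finset.sum_le_sum
    intro j _
    rw [← Real.exp_add]
    apply Real.exp_le_exp.mpr
    have := abs_le.mp (huv j); linarith [this.2]
  have hSv : (0:ℝ) < ∑ j, Real.exp (v j) :=
    Finset.sum_pos (fun j _ => Real.exp_pos _) Finset.univ_nonempty
  have h := div_le_div₀ (Real.exp_pos (v i)).le hnum hSv hden
  calc Real.exp (-(2 * η)) * logitMap n u i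
      = Real.exp (u i - η) / ((∑ j, Real.exp (u j)) * Real.exp η) := by
        unfold logitMap
        have e2 : Real.exp (-(2*η)) * Real.exp η * Real.exp η = 1 := by
          rw [← Real.exp_add, ← Real.exp_add]
          rw [show -(2*η) + η + η = 0 by ring, Real.exp_zero]
        rw [Real.exp_sub]
        field_simp
        linear_combination e2
    _ ≤ logitMap n v i := h

/-- if two payoff vectors differ coordinatewise by at most η, then their
logit images differ coordinatewise by at most 1 − e^{−2η}. -/
theorem stmt_8 (n : ℕ) (hn : 1 ≤ n) (η : ℝ) (hη : 0 ≤ η)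
    (u v : Fin n → ℝ) (huv : ∀ i, |u i - v i| ≤ η) :
    ∀ i : Fin n, |logitMap n u i - logitMap n v i| ≤ 1 - Real.exp (-(2 * η)) := by
  intro i
  haveI : Nonempty (Fin n) := Fin.pos_iff_nonempty.mp hn
  have hSu : (0:ℝ) < ∑ j, Real.exp (u j) :=
    Finset.sum_pos (fun j _ => Real.exp_pos _) Finset.univ_nonempty
  have hSv : (0:ℝ) < ∑ j, Real.exp (v j) :=
    Finset.sum_pos (fun j _ => Real.exp_pos _) Finset.univ_nonempty
  have hu1 : logitMap n u i ≤ 1 := by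
    unfold logitMap
    rw [div_le_one hSu]
    exact Finset.single_le_sum (fun j _ => (Real.exp_pos (u j)).le) (Finset.mem_univ i)
  have hv1 : logitMap n v i ≤ 1 := by
    unfold logitMap
    rw [div_le_one hSv]
    exact Finset.single_le_sum (fun j _ => (Real.exp_pos (v j)).le) (Finset.mem_univ i)
  have hu0 : 0 ≤ logitMap n u i := div_nonneg (Real.exp_pos _).le hSu.le
  have hv0 : 0 ≤ logitMap n v i := div_nonneg (Real.exp_pos _).le hSv.le
  have h1 := logit_key n hn η u v huv i
  have h2 := logit_key n hn η v u (fun j => by rw [abs_sub_comm]; exact huv j) i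
  have he : Real.exp (-(2 * η)) ≤ 1 := by
    apply Real.exp_le_one_iff.mpr; linarith
  have hep : 0 < Real.exp (-(2 * η)) := Real.exp_pos _
  rw [abs_le]
  constructor <;> nlinarith
end

section
/- Let n ≥ 1, let A be a real n × n matrix, and define the logit map δ : ℝⁿ → ℝⁿ by δᵢ(y) = e^{yᵢ}/Σⱼ e^{yⱼ}. Suppose y : ℝ → ℝⁿ is differentiable and satisfies yᵢ'(t) = (A·δ(y(t)))ᵢ for every i and t. Then x(t) := δ(y(t)) is differentiable and satisfies the replicator equation: for every i and t, xᵢ'(t) = xᵢ(t)·((A·x(t))ᵢ − ⟨x(t), A·x(t)⟩). -/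
/-- if the cumulative payoffs satisfy ẏ = A·δ(y), then x(t) = δ(y(t))
solves the replicator equation ẋᵢ = xᵢ((Ax)ᵢ − ⟨x, Ax⟩). -/
theorem stmt_13 (n : ℕ) (hn : 1 ≤ n) (A : Matrix (Fin n) (Fin n) ℝ)
    (y : ℝ → Fin n → ℝ) (hydiff : Differentiable ℝ y)
    (hyode : ∀ (i : Fin n) (t : ℝ),
      HasDerivAt (fun s => y s i) (A.mulVec (logitMap n (y t)) i) t) :
    ∀ (i : Fin n) (t : ℝ),
      HasDerivAt (fun s => logitMap n (y s) i)
        (logitMap n (y t) i *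
          (A.mulVec (logitMap n (y t)) i -
            ∑ j, logitMap n (y t) j * A.mulVec (logitMap n (y t)) j)) t := by
  intro i t
  set v : Fin n → ℝ := A.mulVec (logitMap n (y t)) with hv
  -- derivative of numerator
  have hnum : ∀ j : Fin n, HasDerivAt (fun s => Real.exp (y s j))
      (Real.exp (y t j) * v j) t := fun j => (hyode j t).exp
  -- denominator
  have hden : HasDerivAt (fun s => ∑ j, Real.exp (y s j))
      (∑ j, Real.exp (y t j) * v j) t := HasDerivAt.fun_sum fun j _ => hnum j
  set S : ℝ := ∑ j, Real.exp (y t j) with hS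
  have hSpos : 0 < S := Finset.sum_pos (fun j _ => Real.exp_pos _)
    (by simpa using Finset.univ_nonempty_iff.2 (Fin.pos_iff_nonempty.mp hn))
  have hSne : S ≠ 0 := ne_of_gt hSpos
  have hdiv : HasDerivAt (fun s => logitMap n (y s) i) _ t :=
    (hnum i).fun_div hden hSne
  convert hdiv using 1
  have hx : ∀ j, logitMap n (y t) j = Real.exp (y t j) / S := fun j => rfl
  simp only [hx, ← hS]
  simp_rw [div_mul_eq_mul_div, ← Finset.sum_div]
  field_simp
end
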